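/- Let h : ℝ → ℝ be twice continuously differentiable, Δt > 0, r = 1, ΔT = Δt, and suppose α : ℝ → ℝ satisfies α(s) ≤ s for s ≥ 0. If for every k ∈ ℕ with h(k·Δt) ≥ 0 we have Δt·h'(k·Δt) + α(h(k·Δt)) + (Δt)²/2 · inf_{τ ∈ (kΔt,(k+1)Δt)} h''(τ) ≥ 0 (with the infimum finite), and h(0) ≥ 0, then h(k·Δt) ≥ 0 for all k ∈ ℕ. -/

import Mathlib

open Set

lemma taylor_one_step (h : ℝ → ℝ) (hsmooth : ContDiff ℝ 2 h) {a b : ℝ} (hab : a < b) :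
    ∃ τ ∈ Set.Ioo a b,
      h b = h a + deriv h a * (b - a) + iteratedDeriv 2 h τ * (b - a) ^ 2 / 2 := by
  have hud : UniqueDiffOn ℝ (Icc a b) := uniqueDiffOn_Icc hab
  have hcd : ContDiffOn ℝ 1 h (Icc a b) := (hsmooth.of_le (by norm_num)).contDiffOn
  have hd1 : ∀ x, DifferentiableAt ℝ h x := fun x =>
    (hsmooth.differentiable (by norm_num)).differentiableAt
  have hderiv_cd : ContDiff ℝ 1 (deriv h) := ((contDiff_succ_iff_deriv.mp (show ContDiff ℝ (1+1) h from hsmooth)).2.2)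
  have hd2 : ∀ x, DifferentiableAt ℝ (deriv h) x := fun x =>
    (hderiv_cd.differentiable (by norm_num)).differentiableAt
  -- iteratedDerivWithin 1 agrees with deriv on Icc
  have h1eq : ∀ x ∈ Icc a b, iteratedDerivWithin 1 h (Icc a b) x = deriv h x := by
    intro x hx
    rw [iteratedDerivWithin_one]
    exact (hd1 x).derivWithin (hud x hx)
  have hdiff : DifferentiableOn ℝ (iteratedDerivWithin 1 h (Icc a b)) (Ioo a b) := by
    apply DifferentiableOn.congr (f := deriv h)
    · exact fun x _ => (hd2 x).differentiableWithinAt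
    · intro x hx; exact h1eq x (Ioo_subset_Icc_self hx)
  obtain ⟨τ, hτ, heq⟩ := taylor_mean_remainder_lagrange (n := 1) hab.ne (by rwa [uIcc_of_le hab.le]) (by rwa [uIcc_of_le hab.le, uIoo_of_le hab.le])
  rw [uIoo_of_le hab.le] at hτ
  rw [uIcc_of_le hab.le] at heq
  refine ⟨τ, hτ, ?_⟩
  -- simplify taylor polynomial
  have htay : taylorWithinEval h 1 (Icc a b) a b = h a + deriv h a * (b - a) := by
    rw [taylorWithinEval_succ, taylor_within_zero_eval]
    rw [h1eq a (left_mem_Icc.mpr hab.le)]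
    simp; ring
  -- iteratedDerivWithin 2 = iteratedDeriv 2 at τ
  have h2eq : iteratedDerivWithin 2 h (Icc a b) τ = iteratedDeriv 2 h τ := by
    have hτI : τ ∈ Icc a b := Ioo_subset_Icc_self hτ
    rw [iteratedDerivWithin_succ]
    have : derivWithin (iteratedDerivWithin 1 h (Icc a b)) (Icc a b) τ
        = derivWithin (deriv h) (Icc a b) τ := by
      apply derivWithin_congr h1eq (h1eq τ hτI)
    rw [this, (hd2 τ).derivWithin (hud τ hτI)]
    rw [iteratedDeriv_succ, iteratedDeriv_one]
  rw [htay, h2eq] at heq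
  have : h b - (h a + deriv h a * (b - a)) = iteratedDeriv 2 h τ * (b - a) ^ 2 / 2 := by
    rw [heq]; norm_num
  linarith

theorem ttcbf_relative_degree_one (h : ℝ → ℝ) (hsmooth : ContDiff ℝ 2 h)
    (Δt : ℝ) (hΔt : 0 < Δt) (α : ℝ → ℝ) (hα : ∀ s : ℝ, 0 ≤ s → α s ≤ s)
    (hbdd : ∀ k : ℕ, BddBelow (iteratedDeriv 2 h '' Set.Ioo ((k : ℝ) * Δt) (((k : ℝ) + 1) * Δt)))
    (hcond : ∀ k : ℕ, 0 ≤ h ((k : ℝ) * Δt) →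
      Δt * deriv h ((k : ℝ) * Δt) + α (h ((k : ℝ) * Δt))
        + Δt ^ 2 / 2 * sInf (iteratedDeriv 2 h '' Set.Ioo ((k : ℝ) * Δt) (((k : ℝ) + 1) * Δt)) ≥ 0)
    (hinit : 0 ≤ h 0) :
    ∀ k : ℕ, 0 ≤ h ((k : ℝ) * Δt) := by
  intro k
  induction k with
  | zero => simpa using hinit
  | succ n ih =>
    set a := (n : ℝ) * Δt
    set b := ((n : ℝ) + 1) * Δt
    have hab : a < b := by
      have : (n : ℝ) < (n : ℝ) + 1 := by linarith
      exact mul_lt_mul_of_pos_right this hΔt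
    obtain ⟨τ, hτ, heq⟩ := taylor_one_step h hsmooth hab
    have hba : b - a = Δt := by simp [a, b]; ring
    have hmem : iteratedDeriv 2 h τ ∈ iteratedDeriv 2 h '' Set.Ioo a b := ⟨τ, hτ, rfl⟩
    have hinf : sInf (iteratedDeriv 2 h '' Set.Ioo a b) ≤ iteratedDeriv 2 h τ :=
      csInf_le (hbdd n) hmem
    have hc := hcond n ih
    have hαle : α (h a) ≤ h a := hα _ ih
    have hkey : 0 ≤ h a + Δt * deriv h a
        + Δt ^ 2 / 2 * sInf (iteratedDeriv 2 h '' Set.Ioo a b) := by linarith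
    have hb : ((n : ℝ) + 1) * Δt = b := rfl
    have : h ((↑(n + 1) : ℝ) * Δt) = h b := by push_cast; rfl
    rw [this, heq, hba]
    nlinarith [sq_nonneg Δt]
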